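/- Let $q_F(\beta) = \alpha_F(w\beta/(\beta + b(1-\beta)) + \epsilon)$ and $q_R(\beta) = \alpha_R(w\beta/(\beta + b(1-\beta)) + \epsilon)$ for $\beta \in [0,1]$, with $\alpha_F, \alpha_R, \epsilon, b, w > 0$ and $\max\{\alpha_F, \alpha_R\}(w+\epsilon) < 1$. Then the fixed-point equation $\beta = \beta q_F(\beta) + (1-\beta) q_R(\beta)$ has a unique solution in $(0,1)$. -/

import Mathlib

theorem stmt_0 (αF αR w b ε : ℝ)
    (hαF : 0 < αF) (hαR : 0 < αR) (hw : 0 < w) (hb : 0 < b) (hε : 0 < ε)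
    (hmax : max αF αR * (w + ε) < 1)
    (qF qR : ℝ → ℝ)
    (hqF : ∀ β, qF β = αF * (w * β / (β + b * (1 - β)) + ε))
    (hqR : ∀ β, qR β = αR * (w * β / (β + b * (1 - β)) + ε)) :
    ∃! β : ℝ, β ∈ Set.Ioo (0:ℝ) 1 ∧ β = β * qF β + (1 - β) * qR β := by
  set P : ℝ → ℝ := fun β =>
    β * (β + b * (1 - β)) - (β * αF + (1 - β) * αR) * (w * β + ε * (β + b * (1 - β)))
    with hPdef
  have hF1 : αF * (w + ε) < 1 := by
    have h1 : αF * (w + ε) ≤ max αF αR * (w + ε) :=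
      mul_le_mul_of_nonneg_right (le_max_left _ _) (by positivity)
    linarith
  have hP0 : P 0 = -(αR * ε * b) := by show (0:ℝ) * _ - _ = _; ring
  have hP1 : P 1 = 1 - αF * (w + ε) := by show (1:ℝ) * _ - _ = _; ring
  have hP0neg : P 0 < 0 := by
    rw [hP0]
    have := mul_pos (mul_pos hαR hε) hb
    linarith
  have hP1pos : 0 < P 1 := by rw [hP1]; linarith
  -- denominator positive on (0,1)
  have hden : ∀ β : ℝ, β ∈ Set.Ioo (0:ℝ) 1 → 0 < β + b * (1 - β) := by
    intro β hβ
    have h1 := hβ.1; have h2 := hβ.2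
    nlinarith
  -- equivalence between the fixed point equation and P β = 0 on (0,1)
  have hiff : ∀ β : ℝ, β ∈ Set.Ioo (0:ℝ) 1 →
      ((β = β * qF β + (1 - β) * qR β) ↔ P β = 0) := by
    intro β hβ
    have hd := hden β hβ
    have hkey : (β + b * (1 - β)) * (β - (β * qF β + (1 - β) * qR β)) = P β := by
      rw [hqF, hqR, hPdef]
      field_simp
    constructor
    · intro h
      rw [← hkey, ← h]
      ring
    · intro h
      rw [← hkey] at h
      rcases mul_eq_zero.mp h with h' | h'
      · exact absurd h' hd.ne'
      · linarith
  -- uniqueness of roots of P in (0,1)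
  have huniq : ∀ x y : ℝ, x ∈ Set.Ioo (0:ℝ) 1 → y ∈ Set.Ioo (0:ℝ) 1 →
      P x = 0 → P y = 0 → x = y := by
    intro x y hx hy hPx hPy
    by_contra hne
    set A : ℝ := (1 - b) - (αF - αR) * (w + ε * (1 - b)) with hA
    set B : ℝ := b - αR * (w + ε * (1 - b)) - (αF - αR) * (ε * b) with hB
    set C : ℝ := -(αR * ε * b) with hC
    have hquad : ∀ β : ℝ, P β = A * β ^ 2 + B * β + C := by
      intro β; rw [hA, hB, hC]; show β * _ - _ = _; ring
    have hx0 := hx.1; have hx1 := hx.2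
    have hy0 := hy.1; have hy1 := hy.2
    have hqx : A * x ^ 2 + B * x + C = 0 := by rw [← hquad]; exact hPx
    have hqy : A * y ^ 2 + B * y + C = 0 := by rw [← hquad]; exact hPy
    have hsub : (x - y) * (A * (x + y) + B) = 0 := by linear_combination hqx - hqy
    have hxy : x - y ≠ 0 := sub_ne_zero.mpr hne
    have hB' : A * (x + y) + B = 0 := by
      rcases mul_eq_zero.mp hsub with h | h
      · exact absurd h hxy
      · exact h
    have hC' : C = A * (x * y) := by linear_combination hqx - x * hB'
    have hP1' : P 1 = A * ((1 - x) * (1 - y)) := by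
      rw [hquad 1]; linear_combination hC' + hB'
    have h0 : P 0 = C := by rw [hquad 0]; ring
    -- P 0 * P 1 = A^2 * (x*y*(1-x)*(1-y)) ≥ 0, contradiction
    have hprod : P 0 * P 1 = A ^ 2 * (x * y * ((1 - x) * (1 - y))) := by
      rw [h0, hP1', hC']; ring
    have hnn : 0 ≤ A ^ 2 * (x * y * ((1 - x) * (1 - y))) :=
      mul_nonneg (sq_nonneg A) (mul_nonneg (mul_pos hx0 hy0).le
        (mul_pos (by linarith : (0:ℝ) < 1 - x) (by linarith : (0:ℝ) < 1 - y)).le)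
    have hneg : P 0 * P 1 < 0 := mul_neg_of_neg_of_pos hP0neg hP1pos
    linarith
  -- existence via IVT
  have hcont : ContinuousOn P (Set.Icc 0 1) := by
    apply Continuous.continuousOn
    rw [hPdef]
    fun_prop
  have h0mem : (0:ℝ) ∈ Set.Ioo (P 0) (P 1) := ⟨hP0neg, hP1pos⟩
  obtain ⟨β, hβmem, hβeq⟩ := intermediate_value_Ioo (by norm_num : (0:ℝ) ≤ 1) hcont h0mem
  refine ⟨β, ⟨hβmem, (hiff β hβmem).mpr hβeq⟩, ?_⟩
  intro y hy
  exact huniq y β hy.1 hβmem ((hiff y hy.1).mp hy.2) hβeq
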